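/- Let Y ∈ ℚ⟦X⟧ be the formal power series Y := (1/3)·(1 − ∑_{n≥0} (2/(3n−1))·C(3n, n)·Xⁿ), which has constant coefficient 1 and satisfies X − Y² + Y³ = 0. Then X·Y′ = −Y · ∑_{n≥1} C(3n − 1, n − 1)·Xⁿ in ℚ⟦X⟧; equivalently X·Y′/Y = −∑_{n≥1} C(3n − 1, n − 1)·Xⁿ. -/

import Mathlib

open PowerSeries

private lemma binom_aux (n : ℕ) :
    3 * Nat.choose (3 * n + 2) n = Nat.choose (3 * n + 3) (n + 1) := by
  have h : (3*n+3) * Nat.choose (3*n+2) n = Nat.choose (3*n+3) (n+1) * (n+1) :=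
    Nat.add_one_mul_choose_eq (3 * n + 2) n
  apply Nat.eq_of_mul_eq_mul_left (Nat.succ_pos n)
  calc (n+1) * (3 * Nat.choose (3*n+2) n) = (3*n+3) * Nat.choose (3*n+2) n := by ring
    _ = Nat.choose (3*n+3) (n+1) * (n+1) := h
    _ = (n+1) * Nat.choose (3*n+3) (n+1) := by ring

/-- For `Y = (1/3)·(1 − ∑_{n≥0} (2/(3n−1))·C(3n, n)·Xⁿ)`, the solution with
constant coefficient `1` of `X − Y² + Y³ = 0`, one has
`X·Y′ = −Y · ∑_{n≥1} C(3n − 1, n − 1)·Xⁿ` in `ℚ⟦X⟧`. -/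
theorem figure_eight_bottom_log_derivative (Y : PowerSeries ℚ)
    (hY : Y = PowerSeries.C (R := ℚ) (1 / 3) *
      (1 - PowerSeries.mk fun n =>
        (2 / (3 * (n : ℚ) - 1)) * (Nat.choose (3 * n) n : ℚ)))
    (hconst : PowerSeries.constantCoeff (R := ℚ) Y = 1)
    (hcubic : PowerSeries.X - Y ^ 2 + Y ^ 3 = 0) :
    PowerSeries.X * PowerSeries.derivative ℚ Y =
      -(Y * PowerSeries.mk (fun n => if n = 0 then 0 else
        (Nat.choose (3 * n - 1) (n - 1) : ℚ))) := by
  set D := PowerSeries.derivative ℚ Y with hD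
  set S : PowerSeries ℚ := PowerSeries.mk (fun n => if n = 0 then 0 else
        (Nat.choose (3 * n - 1) (n - 1) : ℚ)) with hSdef
  have h2 : (2 : ℚ⟦X⟧) = PowerSeries.C (R := ℚ) 2 := (map_ofNat _ 2).symm
  have h3 : (3 : ℚ⟦X⟧) = PowerSeries.C (R := ℚ) 3 := (map_ofNat _ 3).symm
  -- Step 1: 2S = Y - 1 - 3 X D  (coefficientwise)
  have hS2 : 2 * S = Y - 1 - 3 * (PowerSeries.X * D) := by
    rw [h2, h3]
    ext n
    rcases n with _ | n
    · simp [hSdef, PowerSeries.coeff_zero_eq_constantCoeff, hconst]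
    · have hXD : (PowerSeries.coeff (R := ℚ) (n+1)) (PowerSeries.X * D) =
        (PowerSeries.coeff (R := ℚ) (n+1)) Y * ((n:ℚ) + 1) := by
        rw [PowerSeries.coeff_succ_X_mul, hD, PowerSeries.coeff_derivative]
      have hYc : (PowerSeries.coeff (R := ℚ) (n+1)) Y =
          (1/3 : ℚ) * (0 - (2 / (3 * ((n:ℚ)+1) - 1)) * (Nat.choose (3*(n+1)) (n+1) : ℚ)) := by
        rw [hY]
        simp [PowerSeries.coeff_C_mul, PowerSeries.coeff_one, PowerSeries.coeff_mk]
      simp only [map_sub, PowerSeries.coeff_C_mul, hXD, hYc, hSdef, PowerSeries.coeff_mk,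
        PowerSeries.coeff_one, Nat.succ_ne_zero, if_false]
      have hb : ((Nat.choose (3*(n+1)) (n+1) : ℚ)) = 3 * (Nat.choose (3*(n+1)-1) ((n+1)-1) : ℚ) := by
        have hba := binom_aux n
        have e1 : 3*(n+1)-1 = 3*n+2 := by omega
        have e2 : (n+1)-1 = n := by omega
        have e3 : 3*(n+1) = 3*n+3 := by omega
        rw [e1, e2, e3, ← hba]
        push_cast; ring
      have hne : (3 * ((n:ℚ)+1) - 1) ≠ 0 := by
        have h0 : (0:ℚ) ≤ (n:ℚ) := Nat.cast_nonneg n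
        intro h; linarith
      rw [hb]
      field_simp
      ring
  -- Step 2: differentiate the cubic
  have hd0 : PowerSeries.derivative ℚ (PowerSeries.X - Y ^ 2 + Y ^ 3) = 0 := by
    rw [hcubic]; simp
  rw [map_add, map_sub, PowerSeries.derivative_X, Derivation.leibniz_pow,
      Derivation.leibniz_pow, ← hD] at hd0
  simp only [smul_eq_mul, nsmul_eq_mul, Nat.cast_ofNat, pow_one] at hd0
  norm_num at hd0
  -- hd0 : 1 - 2 * (Y * D) + 3 * (Y^2 * D) = 0
  have key : PowerSeries.X * D * (2 * Y - 3 * Y^2) = Y^2 - Y^3 := by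
    linear_combination (-PowerSeries.X) * hd0 + hcubic
  have hY0 : Y ≠ 0 := fun h => by rw [h] at hconst; simp at hconst
  have h2Y : (2 : ℚ⟦X⟧) * Y ≠ 0 := by
    apply mul_ne_zero _ hY0
    intro h
    have := congrArg (PowerSeries.constantCoeff (R := ℚ)) h
    rw [map_ofNat] at this
    norm_num at this
  apply mul_left_cancel₀ h2Y
  linear_combination Y^2 * hS2 + key
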